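/- Let n ≥ 2 be an integer and r a real number with 0 < r < π/4. Put α = −2·tan(2r), k = α/2, β = 2·cot(2r) and h = α + (4n−1)β. Then the two conditions 4 − h·β + β² = 0 and 4k + (h − β)(4 + k·β) = 0 both hold if and only if tan(2r) = √(2n−1). -/

import Mathlib

/-- For a Type (B) tube of radius `r ∈ (0, π/4)` with `k = α/2`, the two
GTW-Reeb parallelism conditions on `T_β` and `T_γ` hold iff
`tan(2r) = √(2n−1)`. -/
theorem typeB_GTW_Reeb_parallel_radius (n : ℕ) (hn : 2 ≤ n)
    (r : ℝ) (hr0 : 0 < r) (hr1 : r < Real.pi / 4)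
    (α k β h : ℝ)
    (hα : α = -2 * Real.tan (2 * r))
    (hk : k = α / 2)
    (hβ : β = 2 * Real.cot (2 * r))
    (hh : h = α + (4 * (n : ℝ) - 1) * β) :
    (4 - h * β + β ^ 2 = 0 ∧ 4 * k + (h - β) * (4 + k * β) = 0) ↔
      Real.tan (2 * r) = Real.sqrt (2 * (n : ℝ) - 1) := by
  have h2r0 : 0 < 2 * r := by linarith
  have h2r1 : 2 * r < Real.pi / 2 := by linarith
  set t := Real.tan (2 * r) with htdef
  have ht : 0 < t := Real.tan_pos_of_pos_of_lt_pi_div_two h2r0 h2r1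
  have hcos : 0 < Real.cos (2 * r) := by
    apply Real.cos_pos_of_mem_Ioo
    constructor <;> [linarith [Real.pi_pos]; linarith]
  have hsin : 0 < Real.sin (2 * r) := Real.sin_pos_of_pos_of_lt_pi h2r0 (by linarith [Real.pi_pos])
  have hcot : Real.cot (2 * r) = 1 / t := by
    rw [Real.cot_eq_cos_div_sin, htdef, Real.tan_eq_sin_div_cos, one_div_div]
  have hnn : (1:ℝ) ≤ 2 * (n:ℝ) - 1 := by
    have : (2:ℝ) ≤ (n:ℝ) := by exact_mod_cast hn
    linarith
  subst hk hh hα hβ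
  rw [hcot]
  constructor
  · rintro ⟨h1, _⟩
    have ht2 : t ^ 2 = 2 * (n:ℝ) - 1 := by
      field_simp at h1
      have key : t ^ 2 * (t ^ 2 - (2 * (n:ℝ) - 1)) = 0 := by linear_combination t ^ 2 * h1 / 8
      rcases mul_eq_zero.mp key with hk0 | hk0
      · nlinarith [ht]
      · linarith
    have : Real.sqrt (2 * (n:ℝ) - 1) = Real.sqrt (t ^ 2) := by rw [ht2]
    rw [this, Real.sqrt_sq ht.le]
  · intro heq
    have ht2 : t ^ 2 = 2 * (n:ℝ) - 1 := by
      rw [heq, Real.sq_sqrt (by linarith)]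
    constructor <;> (field_simp; nlinarith [ht])
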